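/- For any vectors x, y, z in a complex Hilbert space H, |⟨x,y⟩‖z‖² − ⟨x,z⟩⟨z,y⟩| ≤ √(‖x‖²‖z‖² − |⟨x,z⟩|²) · √(‖y‖²‖z‖² − |⟨y,z⟩|²). -/

import Mathlib

open scoped InnerProductSpace

theorem cs_type_refinement {H : Type*} [NormedAddCommGroup H]
    [InnerProductSpace ℂ H] [CompleteSpace H] (x y z : H) :
    ‖⟪x, y⟫_ℂ * (‖z‖ : ℂ) ^ 2 - ⟪x, z⟫_ℂ * ⟪z, y⟫_ℂ‖ ≤
      Real.sqrt (‖x‖ ^ 2 * ‖z‖ ^ 2 - ‖⟪x, z⟫_ℂ‖ ^ 2) *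
        Real.sqrt (‖y‖ ^ 2 * ‖z‖ ^ 2 - ‖⟪y, z⟫_ℂ‖ ^ 2) := by
  rcases eq_or_ne z 0 with hz | hz
  · simp [hz]
  have hz2 : (0:ℝ) < ‖z‖ ^ 2 := pow_pos (norm_pos_iff.mpr hz) 2
  set u : H := ((‖z‖:ℂ)^2) • x - ⟪z, x⟫_ℂ • z with hu
  set v : H := ((‖z‖:ℂ)^2) • y - ⟪z, y⟫_ℂ • z with hv
  have hzz : ⟪z, z⟫_ℂ = (‖z‖:ℂ)^2 := by
    rw [inner_self_eq_norm_sq_to_K]; norm_cast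
  have key : ∀ a b : H, ⟪((‖z‖:ℂ)^2) • a - ⟪z, a⟫_ℂ • z,
      ((‖z‖:ℂ)^2) • b - ⟪z, b⟫_ℂ • z⟫_ℂ
      = (‖z‖:ℂ)^2 * (⟪a, b⟫_ℂ * (‖z‖:ℂ)^2 - ⟪a, z⟫_ℂ * ⟪z, b⟫_ℂ) := by
    intro a b
    simp only [inner_sub_left, inner_sub_right, inner_smul_left, inner_smul_right,
      hzz, map_pow, Complex.conj_ofReal, inner_conj_symm]
    ring
  have huv : ⟪u, v⟫_ℂ = (‖z‖:ℂ)^2 * (⟪x, y⟫_ℂ * (‖z‖:ℂ)^2 - ⟪x, z⟫_ℂ * ⟪z, y⟫_ℂ) :=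
    key x y
  have hnorm : ∀ a : H, ‖((‖z‖:ℂ)^2) • a - ⟪z, a⟫_ℂ • z‖
      = ‖z‖ * Real.sqrt (‖a‖ ^ 2 * ‖z‖ ^ 2 - ‖⟪a, z⟫_ℂ‖ ^ 2) := by
    intro a
    have h1 : ⟪((‖z‖:ℂ)^2) • a - ⟪z, a⟫_ℂ • z, ((‖z‖:ℂ)^2) • a - ⟪z, a⟫_ℂ • z⟫_ℂ
        = (‖z‖:ℂ)^2 * (⟪a, a⟫_ℂ * (‖z‖:ℂ)^2 - ⟪a, z⟫_ℂ * ⟪z, a⟫_ℂ) := key a a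
    have h2 : ‖((‖z‖:ℂ)^2) • a - ⟪z, a⟫_ℂ • z‖ ^ 2
        = ‖z‖^2 * (‖a‖ ^ 2 * ‖z‖ ^ 2 - ‖⟪a, z⟫_ℂ‖ ^ 2) := by
      have h1' := h1
      have hm : ⟪a, z⟫_ℂ * ⟪z, a⟫_ℂ = ((‖⟪a, z⟫_ℂ‖ ^ 2 : ℝ) : ℂ) := by
        rw [← inner_conj_symm z a, Complex.mul_conj, Complex.normSq_eq_norm_sq]
      rw [inner_self_eq_norm_sq_to_K, inner_self_eq_norm_sq_to_K, hm] at h1'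
      rw [show ‖⟪a, z⟫_ℂ‖ = ‖⟪a, z⟫_ℂ‖ from rfl]
      simp only [Complex.coe_algebraMap] at h1'
      exact_mod_cast h1'
    have hA : (0:ℝ) ≤ ‖a‖ ^ 2 * ‖z‖ ^ 2 - ‖⟪a, z⟫_ℂ‖ ^ 2 := by
      nlinarith [norm_inner_le_norm (𝕜 := ℂ) a z, norm_nonneg a, norm_nonneg z,
        norm_nonneg (⟪a, z⟫_ℂ)]
    calc ‖((‖z‖:ℂ)^2) • a - ⟪z, a⟫_ℂ • z‖
        = Real.sqrt (‖((‖z‖:ℂ)^2) • a - ⟪z, a⟫_ℂ • z‖ ^ 2) := by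
          rw [Real.sqrt_sq (norm_nonneg _)]
      _ = ‖z‖ * Real.sqrt (‖a‖ ^ 2 * ‖z‖ ^ 2 - ‖⟪a, z⟫_ℂ‖ ^ 2) := by
          rw [h2, Real.sqrt_mul (by positivity), Real.sqrt_sq (norm_nonneg z)]
  have hcs := norm_inner_le_norm (𝕜 := ℂ) u v
  rw [huv, hu, hv, hnorm x, hnorm y] at hcs
  rw [norm_mul] at hcs
  have : ‖((‖z‖:ℂ)^2)‖ = ‖z‖^2 := by
    simp [norm_pow]
  rw [this] at hcs
  nlinarith [Real.sqrt_nonneg (‖x‖ ^ 2 * ‖z‖ ^ 2 - ‖⟪x, z⟫_ℂ‖ ^ 2),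
    Real.sqrt_nonneg (‖y‖ ^ 2 * ‖z‖ ^ 2 - ‖⟪y, z⟫_ℂ‖ ^ 2)]
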